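/- arXiv:1703.09731 — 6 statements merged into one kernel-verified Lean document; each statement's English description precedes it below -/
import Mathlib

section
/- Let q ∈ (0,1] and define f : ℝ → ℝ by f(z) = (1-q)z + (q/2)(1 + z²) (the probability generating function of the offspring law which with probability 1-q produces exactly one offspring and with probability q performs critical binary branching, i.e. 0 or 2 offspring with probability 1/2 each). Let s_n := 1 - f^{[n]}(0), where f^{[n]} denotes the n-fold iterate of f (so s_n is the probability that the corresponding Galton–Watson process started from one particle survives to generation n). Then lim_{n→∞} n·s_n = 2/q; equivalently, the survival probability up to time n is asymptotic to 2/(qn) as n → ∞. -/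
open Filter

/-- Non-spatial toy model, critical case: branching occurs with probability `q`, and then it
is critical binary; the survival probability up to generation `n` is asymptotic to `2/(q n)`. -/
theorem toy_model_critical_survival (q : ℝ) (hq0 : 0 < q) (hq1 : q ≤ 1)
    (f : ℝ → ℝ) (hf : ∀ z, f z = (1 - q) * z + (q / 2) * (1 + z ^ 2))
    (s : ℕ → ℝ) (hs : ∀ n, s n = 1 - f^[n] 0) :
    Tendsto (fun n : ℕ => (n : ℝ) * s n) atTop (nhds (2 / q)) := by
  have hrec : ∀ n, s (n + 1) = s n - q / 2 * s n ^ 2 := by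
    intro n
    have h1 : f^[n] 0 = 1 - s n := by rw [hs]; ring
    rw [hs, Function.iterate_succ_apply', hf, h1]
    ring
  have hbnd : ∀ n, 0 < s n ∧ s n ≤ 1 := by
    intro n
    induction n with
    | zero => simp [hs 0]
    | succ n ih =>
      obtain ⟨h0, h1⟩ := ih
      have hfac : s (n + 1) = s n * (1 - q / 2 * s n) := by rw [hrec]; ring
      have hq2 : q / 2 * s n ≤ 1 / 2 := by nlinarith
      constructor
      · rw [hfac]; nlinarith
      · nlinarith [hrec n]
  have hpos : ∀ n, 0 < s n := fun n => (hbnd n).1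
  have hanti : Antitone s := by
    apply antitone_nat_of_succ_le
    intro n
    nlinarith [hrec n, hpos n]
  -- s tends to 0
  have hbdd : BddBelow (Set.range s) := ⟨0, by rintro x ⟨n, rfl⟩; exact (hpos n).le⟩
  have hlim : Tendsto s atTop (nhds (⨅ n, s n)) := tendsto_atTop_ciInf hanti hbdd
  set L := ⨅ n, s n with hL
  have hL0 : 0 ≤ L := le_ciInf fun n => (hpos n).le
  have hlim' : Tendsto (fun n => s (n + 1)) atTop (nhds L) :=
    hlim.comp (tendsto_add_atTop_nat 1)
  have hlim2 : Tendsto (fun n => s n - q / 2 * s n ^ 2) atTop (nhds (L - q / 2 * L ^ 2)) := by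
    exact (hlim.sub (((hlim.pow 2).const_mul _)))
  have hLeq : L = L - q / 2 * L ^ 2 := by
    apply tendsto_nhds_unique hlim'
    exact hlim2.congr fun n => (hrec n).symm
  have hLzero : L = 0 := by
    have h : q / 2 * L ^ 2 = 0 := by linarith
    have h2 : L ^ 2 = 0 := (mul_eq_zero.1 h).resolve_left (by positivity)
    exact pow_eq_zero_iff (by norm_num) |>.1 h2
  rw [hLzero] at hlim
  -- differences of 1/s n
  have hu : ∀ n, 1 / s (n + 1) - 1 / s n = q / 2 / (1 - q / 2 * s n) := by
    intro n
    have h0 := hpos n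
    have h1 := hpos (n + 1)
    have hne : 0 < 1 - q / 2 * s n := by nlinarith [(hbnd n).2]
    have h2 : s (n + 1) = s n * (1 - q / 2 * s n) := by rw [hrec]; ring
    rw [h2, div_sub_div _ _ (mul_ne_zero h0.ne' hne.ne') h0.ne',
      div_eq_div_iff (by positivity) hne.ne']
    ring
  have hulim : Tendsto (fun n => 1 / s (n + 1) - 1 / s n) atTop (nhds (q / 2)) := by
    have : Tendsto (fun n => q / 2 / (1 - q / 2 * s n)) atTop (nhds (q / 2 / (1 - q / 2 * 0))) := by
      apply Tendsto.div tendsto_const_nhds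
      · exact tendsto_const_nhds.sub (hlim.const_mul _)
      · norm_num
    simp only [mul_zero, sub_zero, div_one] at this
    exact this.congr fun n => (hu n).symm
  -- Cesàro
  have hces := hulim.cesaro
  have htel : ∀ n, (∑ i ∈ Finset.range n, (1 / s (i + 1) - 1 / s i)) = 1 / s n - 1 / s 0 :=
    fun n => Finset.sum_range_sub (fun i => 1 / s i) n
  have hs0 : s 0 = 1 := by simp [hs 0]
  have hces' : Tendsto (fun n : ℕ => (1 / s n - 1) / n) atTop (nhds (q / 2)) := by
    apply hces.congr
    intro n
    rw [htel, hs0]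
    ring
  have hinvn : Tendsto (fun n : ℕ => (1 : ℝ) / n) atTop (nhds 0) := tendsto_one_div_atTop_nhds_zero_nat
  have hmain : Tendsto (fun n : ℕ => (1 / s n) / n) atTop (nhds (q / 2)) := by
    have := hces'.add hinvn
    rw [add_zero] at this
    apply this.congr'
    filter_upwards [eventually_ge_atTop 1] with n hn
    have : (n : ℝ) ≠ 0 := by positivity
    field_simp
    ring
  have hq2 : (q / 2) ≠ 0 := by positivity
  have hinv := hmain.inv₀ hq2
  have : (q / 2)⁻¹ = 2 / q := by field_simp
  rw [this] at hinv
  apply hinv.congr'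
  filter_upwards [eventually_ge_atTop 1] with n hn
  have hn0 : (n : ℝ) ≠ 0 := by positivity
  have := (hpos n).ne'
  field_simp
end

section
/- Let c > 0 and let (s_n)_{n≥0} be a real sequence with s_0 ∈ (0, 1/c) and s_{n+1} = s_n - c·s_n² for all n ≥ 0. Then s_n ∈ (0, 1/c) for all n, s_n is strictly decreasing, and lim_{n→∞} n·s_n = 1/c. -/
open Filter

/-- Analytic core of the critical survival asymptotics: if `s₀ ∈ (0, 1/c)` and
`s_{n+1} = s_n - c s_n²`, then `s_n` stays in `(0,1/c)`, is strictly decreasing, and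
`n · s_n → 1/c`. -/
theorem quadratic_recursion_asymptotics (c : ℝ) (hc : 0 < c) (s : ℕ → ℝ)
    (hs0 : s 0 ∈ Set.Ioo 0 (1 / c))
    (hrec : ∀ n : ℕ, s (n + 1) = s n - c * (s n) ^ 2) :
    (∀ n : ℕ, s n ∈ Set.Ioo 0 (1 / c)) ∧ StrictAnti s ∧
      Tendsto (fun n : ℕ => (n : ℝ) * s n) atTop (nhds (1 / c)) := by
  -- membership
  have hmem : ∀ n : ℕ, s n ∈ Set.Ioo 0 (1 / c) := by
    intro n
    induction n with
    | zero => exact hs0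
    | succ n ih =>
      obtain ⟨h0, h1⟩ := ih
      have hcs : c * s n < 1 := by
        rw [lt_div_iff₀ hc] at h1; linarith [mul_comm (s n) c]
      have key : s (n + 1) = s n * (1 - c * s n) := by rw [hrec n]; ring
      constructor
      · rw [key]; exact mul_pos h0 (by linarith)
      · have : s (n + 1) < s n := by
          rw [hrec n]
          have : 0 < c * (s n) ^ 2 := mul_pos hc (pow_pos h0 2)
          linarith
        linarith
  have hpos : ∀ n, 0 < s n := fun n => (hmem n).1
  have hlt : ∀ n, c * s n < 1 := by
    intro n
    have h1 := (hmem n).2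
    rw [lt_div_iff₀ hc] at h1; linarith [mul_comm (s n) c]
  have hdec : ∀ n, s (n + 1) < s n := by
    intro n
    rw [hrec n]
    have : 0 < c * (s n) ^ 2 := mul_pos hc (pow_pos (hpos n) 2)
    linarith
  have hanti : StrictAnti s := strictAnti_nat_of_succ_lt hdec
  -- s tends to 0
  have hs0lim : Tendsto s atTop (nhds 0) := by
    have hbdd : BddBelow (Set.range s) := ⟨0, fun x ⟨n, hn⟩ => hn ▸ (hpos n).le⟩
    have hL : Tendsto s atTop (nhds (⨅ n, s n)) :=
      tendsto_atTop_ciInf hanti.antitone hbdd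
    set L := ⨅ n, s n with hLdef
    have hL1 : Tendsto (fun n => s (n + 1)) atTop (nhds L) :=
      hL.comp (tendsto_add_atTop_nat 1)
    have hL2 : Tendsto (fun n => s n - c * (s n) ^ 2) atTop (nhds (L - c * L ^ 2)) := by
      exact hL.sub ((tendsto_const_nhds.mul (hL.pow 2)))
    have heq : L = L - c * L ^ 2 := by
      refine tendsto_nhds_unique hL1 ?_
      exact hL2.congr fun n => (hrec n).symm
    have hL0 : L = 0 := by
      have : c * L ^ 2 = 0 := by linarith
      have hL2z : L ^ 2 = 0 := by
        rcases mul_eq_zero.mp this with h | h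
        · exact absurd h hc.ne'
        · exact h
      exact pow_eq_zero_iff (n := 2) (by norm_num) |>.mp hL2z
    rwa [hL0] at hL
  -- telescoping: 1/s n = 1/s 0 + ∑_{i<n} c/(1 - c s i)
  set d : ℕ → ℝ := fun n => c / (1 - c * s n) with hd
  have hden : ∀ n, (0:ℝ) < 1 - c * s n := fun n => by linarith [hlt n]
  have htel : ∀ n, 1 / s n = 1 / s 0 + ∑ i ∈ Finset.range n, d i := by
    intro n
    induction n with
    | zero => simp
    | succ n ih =>
      rw [Finset.sum_range_succ, ← add_assoc, ← ih]
      have key : s (n + 1) = s n * (1 - c * s n) := by rw [hrec n]; ring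
      have h1 := (hpos n).ne'
      have h2 := (hden n).ne'
      rw [key, div_add_div _ _ h1 h2]
      congr 1
      ring
  -- d tends to c
  have hdlim : Tendsto d atTop (nhds c) := by
    have h1 : Tendsto (fun n => 1 - c * s n) atTop (nhds 1) := by
      have := (tendsto_const_nhds (x := c)).mul hs0lim
      rw [mul_zero] at this
      simpa using (tendsto_const_nhds (x := (1:ℝ))).sub this
    have := (tendsto_const_nhds (x := c)).div h1 one_ne_zero
    rw [div_one] at this
    exact this
  -- Cesaro
  have hces : Tendsto (fun n : ℕ => ((n : ℝ))⁻¹ * ∑ i ∈ Finset.range n, d i) atTop (nhds c) :=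
    hdlim.cesaro
  have hinv : Tendsto (fun n : ℕ => ((n : ℝ))⁻¹ * (1 / s n)) atTop (nhds c) := by
    have h0 : Tendsto (fun n : ℕ => ((n : ℝ))⁻¹ * (1 / s 0)) atTop (nhds 0) := by
      have := (tendsto_inv_atTop_nhds_zero_nat).mul_const (1 / s 0)
      simpa using this
    have := h0.add hces
    rw [zero_add] at this
    refine this.congr fun n => ?_
    rw [htel n]; ring
  have hfin : Tendsto (fun n : ℕ => (n : ℝ) * s n) atTop (nhds (1 / c)) := by
    have := hinv.inv₀ hc.ne'
    refine Tendsto.congr' ?_ (by simpa [one_div] using this)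
    filter_upwards [Ioi_mem_atTop 0] with n hn
    ring
  exact ⟨hmem, hanti, hfin⟩
end

section
/- (Kolmogorov's critical survival asymptotics.) Let (p_k)_{k≥0} be a probability distribution on the nonnegative integers (p_k ≥ 0 for all k, Σ_{k≥0} p_k = 1) with mean Σ_{k≥0} k·p_k = 1, with p_1 < 1, and with finite second factorial moment σ² := Σ_{k≥0} k(k-1)·p_k < ∞. Let φ(z) = Σ_{k≥0} p_k z^k be its probability generating function. Then σ² > 0 and lim_{n→∞} n·(1 - φ^{[n]}(0)) = 2/σ²; i.e., the survival probability of the critical Galton–Watson process up to generation n is asymptotic to 2/(n·φ''(1)). -/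
open Filter Topology

lemma aux_nn2 (k : ℕ) : (0:ℝ) ≤ (k:ℝ) * ((k:ℝ) - 1) := by
  rcases k with _|k
  · norm_num
  · have : (0:ℝ) ≤ (k:ℝ) := Nat.cast_nonneg k
    push_cast; nlinarith

lemma aux_nn3 (k : ℕ) : (0:ℝ) ≤ (k:ℝ) * ((k:ℝ) - 1) * ((k:ℝ) - 2) := by
  rcases k with _|_|k
  · norm_num
  · norm_num
  · have h : (0:ℝ) ≤ (k:ℝ) := Nat.cast_nonneg k
    push_cast
    nlinarith [mul_nonneg (mul_nonneg h (by linarith : (0:ℝ) ≤ (k:ℝ)+1)) (by linarith : (0:ℝ) ≤ (k:ℝ)+2)]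

lemma aux_bernoulli (k : ℕ) {u : ℝ} (hu : u ≤ 1) : 1 - (k:ℝ) * u ≤ (1 - u) ^ k := by
  have h := one_add_mul_le_pow (a := -u) (by linarith) k
  simpa [sub_eq_add_neg, mul_comm] using h

lemma aux_upper (k : ℕ) {u : ℝ} (hu0 : 0 ≤ u) (hu1 : u ≤ 1) :
    (1 - u) ^ k ≤ 1 - (k:ℝ) * u + (k:ℝ) * ((k:ℝ) - 1) / 2 * u ^ 2 := by
  induction k with
  | zero => norm_num
  | succ k ih =>
    have h1 : (0:ℝ) ≤ 1 - u := by linarith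
    have h2 : (1 - u) ^ (k+1) = (1 - u) * (1 - u) ^ k := by ring
    have h3 : (1 - u) * (1 - u) ^ k ≤ (1 - u) * (1 - (k:ℝ) * u + (k:ℝ) * ((k:ℝ) - 1) / 2 * u ^ 2) :=
      mul_le_mul_of_nonneg_left ih h1
    have h4 : (1 - u) * (1 - (k:ℝ) * u + (k:ℝ) * ((k:ℝ) - 1) / 2 * u ^ 2)
        = 1 - ((k:ℝ)+1) * u + ((k:ℝ)+1) * (((k:ℝ)+1) - 1) / 2 * u ^ 2
          - (k:ℝ) * ((k:ℝ) - 1) / 2 * u ^ 3 := by ring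
    have h5 : (0:ℝ) ≤ (k:ℝ) * ((k:ℝ) - 1) / 2 * u ^ 3 := by
      have := aux_nn2 k
      positivity
    push_cast
    rw [h2]
    linarith [h3, h4.le, h4.ge]

lemma aux_lower (k : ℕ) {u : ℝ} (hu0 : 0 ≤ u) (hu1 : u ≤ 1) :
    1 - (k:ℝ) * u + (k:ℝ) * ((k:ℝ) - 1) / 2 * u ^ 2 - (k:ℝ) * ((k:ℝ) - 1) * ((k:ℝ) - 2) / 6 * u ^ 3
      ≤ (1 - u) ^ k := by
  induction k with
  | zero => norm_num
  | succ k ih =>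
    have h1 : (0:ℝ) ≤ 1 - u := by linarith
    have h2 : (1 - u) ^ (k+1) = (1 - u) * (1 - u) ^ k := by ring
    have h3 : (1 - u) * (1 - (k:ℝ) * u + (k:ℝ) * ((k:ℝ) - 1) / 2 * u ^ 2
        - (k:ℝ) * ((k:ℝ) - 1) * ((k:ℝ) - 2) / 6 * u ^ 3) ≤ (1 - u) * (1 - u) ^ k :=
      mul_le_mul_of_nonneg_left ih h1
    have h4 : (1 - u) * (1 - (k:ℝ) * u + (k:ℝ) * ((k:ℝ) - 1) / 2 * u ^ 2
        - (k:ℝ) * ((k:ℝ) - 1) * ((k:ℝ) - 2) / 6 * u ^ 3)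
        = 1 - ((k:ℝ)+1) * u + ((k:ℝ)+1) * (((k:ℝ)+1) - 1) / 2 * u ^ 2
          - ((k:ℝ)+1) * (((k:ℝ)+1) - 1) * (((k:ℝ)+1) - 2) / 6 * u ^ 3
          + (k:ℝ) * ((k:ℝ) - 1) * ((k:ℝ) - 2) / 6 * u ^ 4 := by ring
    have h5 : (0:ℝ) ≤ (k:ℝ) * ((k:ℝ) - 1) * ((k:ℝ) - 2) / 6 * u ^ 4 := by
      have := aux_nn3 k
      positivity
    push_cast
    rw [h2]
    linarith [h3, h4.le, h4.ge]

lemma aux_strict (k : ℕ) (hk : 2 ≤ k) {u : ℝ} (hu0 : 0 ≤ u) (hu1 : u ≤ 1) :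
    u ^ 2 ≤ (k:ℝ) * u - 1 + (1 - u) ^ k := by
  obtain ⟨m, rfl⟩ := Nat.exists_eq_add_of_le hk
  have hb : 1 - (m:ℝ) * u ≤ (1 - u) ^ m := aux_bernoulli m hu1
  have h1 : (0:ℝ) ≤ (1 - u)^2 := sq_nonneg _
  have h2 : (1 - u) ^ (2 + m) = (1-u)^2 * (1-u)^m := by ring
  rw [h2]
  have h3 : (1-u)^2 * (1 - (m:ℝ)*u) ≤ (1-u)^2 * (1-u)^m := mul_le_mul_of_nonneg_left hb h1
  have hm : (0:ℝ) ≤ (m:ℝ) := Nat.cast_nonneg m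
  push_cast
  nlinarith [mul_nonneg (mul_nonneg hm hu0) (mul_nonneg hu0 (by linarith : (0:ℝ) ≤ 2 - u))]

/-- Kolmogorov's asymptotics for the survival probability of a critical Galton–Watson
process: `n · P(survival to generation n) → 2/σ²` where `σ² = φ''(1)` is the second
factorial moment of the offspring law. -/
theorem kolmogorov_critical_survival (p : ℕ → ℝ)
    (hp_nonneg : ∀ k, 0 ≤ p k) (hp_summable : Summable p) (hp_total : ∑' k : ℕ, p k = 1)
    (hmean_summable : Summable (fun k : ℕ => (k : ℝ) * p k))
    (hmean : ∑' k : ℕ, (k : ℝ) * p k = 1)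
    (hp1 : p 1 < 1)
    (σ2 : ℝ)
    (hσ_summable : Summable (fun k : ℕ => (k : ℝ) * ((k : ℝ) - 1) * p k))
    (hσ : σ2 = ∑' k : ℕ, (k : ℝ) * ((k : ℝ) - 1) * p k)
    (φ : ℝ → ℝ) (hφ : ∀ z, φ z = ∑' k : ℕ, p k * z ^ k) :
    0 < σ2 ∧
      Tendsto (fun n : ℕ => (n : ℝ) * (1 - φ^[n] 0)) atTop (nhds (2 / σ2)) := by
  have hterm_nn : ∀ k : ℕ, 0 ≤ (k:ℝ) * ((k:ℝ)-1) * p k :=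
    fun k => mul_nonneg (aux_nn2 k) (hp_nonneg k)
  have hσnn : 0 ≤ σ2 := hσ ▸ tsum_nonneg hterm_nn
  -- σ2 > 0
  have hσpos : 0 < σ2 := by
    rcases hσnn.lt_or_eq with h | h
    · exact h
    · exfalso
      have hzero : ∀ k : ℕ, 2 ≤ k → p k = 0 := by
        intro k hk
        have h1 : (k:ℝ) * ((k:ℝ)-1) * p k ≤ σ2 :=
          hσ ▸ Summable.le_tsum hσ_summable k (fun j _ => hterm_nn j)
        have h2 : (0:ℝ) < (k:ℝ) * ((k:ℝ)-1) := by
          have : (2:ℝ) ≤ (k:ℝ) := by exact_mod_cast hk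
          nlinarith
        have h3 : p k ≤ 0 := by
          by_contra hc
          push_neg at hc
          nlinarith
        exact le_antisymm h3 (hp_nonneg k)
      have hsingle := tsum_eq_single (L := SummationFilter.unconditional ℕ) (f := fun k:ℕ => (k:ℝ) * p k) 1 (by
        intro b hb
        rcases b with _|_|b
        · norm_num
        · exact absurd rfl hb
        · simp [hzero (b+1+1) (by omega)])
      rw [hmean] at hsingle
      norm_num at hsingle
      linarith
  -- exists m ≥ 2 with p m > 0
  obtain ⟨m, hm2, hmpos⟩ : ∃ m:ℕ, 2 ≤ m ∧ 0 < p m := by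
    by_contra hcon
    push_neg at hcon
    have hz : ∀ k:ℕ, (k:ℝ)*((k:ℝ)-1)*p k = 0 := by
      intro k
      rcases lt_or_ge k 2 with hk | hk
      · interval_cases k <;> norm_num
      · have h1 := hcon k hk
        have h2 := hp_nonneg k
        have : p k = 0 := le_antisymm h1 h2
        rw [this, mul_zero]
    rw [hσ, tsum_congr hz, tsum_zero] at hσpos
    exact lt_irrefl 0 hσpos
  refine ⟨hσpos, ?_⟩
  -- summability of the power series on [0,1]
  have hpow_sum : ∀ z:ℝ, 0 ≤ z → z ≤ 1 → Summable (fun k => p k * z ^ k) := by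
    intro z h0 h1
    exact Summable.of_nonneg_of_le (fun k => mul_nonneg (hp_nonneg k) (pow_nonneg h0 k))
      (fun k => mul_le_of_le_one_right (hp_nonneg k) (pow_le_one₀ h0 h1)) hp_summable
  -- the key remainder terms
  set T : ℝ → ℕ → ℝ := fun u k => p k * ((k:ℝ)*u - 1 + (1-u)^k) with hT_def
  have hT_nn : ∀ u:ℝ, 0 ≤ u → u ≤ 1 → ∀ k, 0 ≤ T u k := by
    intro u h0 h1 k
    have := aux_bernoulli k h1
    exact mul_nonneg (hp_nonneg k) (by linarith)
  have hT_le : ∀ u:ℝ, 0 ≤ u → u ≤ 1 → ∀ k,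
      T u k ≤ (k:ℝ)*((k:ℝ)-1)*p k * (u^2/2) := by
    intro u h0 h1 k
    calc T u k ≤ p k * ((k:ℝ)*((k:ℝ)-1)/2 * u^2) := by
          apply mul_le_mul_of_nonneg_left _ (hp_nonneg k)
          have := aux_upper k h0 h1
          linarith
      _ = (k:ℝ)*((k:ℝ)-1)*p k * (u^2/2) := by ring
  have hT_sum : ∀ u:ℝ, 0 ≤ u → u ≤ 1 → Summable (T u) := by
    intro u h0 h1
    exact Summable.of_nonneg_of_le (hT_nn u h0 h1) (hT_le u h0 h1) (hσ_summable.mul_right _)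
  -- identity: 1 - φ(1-u) = u - ∑ T u k
  have hDf : ∀ u:ℝ, 0 ≤ u → u ≤ 1 → 1 - φ (1-u) = u - ∑' k, T u k := by
    intro u h0 h1
    have hz0 : (0:ℝ) ≤ 1-u := by linarith
    have hz1 : 1-u ≤ 1 := by linarith
    have s1 : Summable (fun k:ℕ => (k:ℝ)*p k*u) := hmean_summable.mul_right u
    have s3 := hpow_sum (1-u) hz0 hz1
    have e1 : ∀ k:ℕ, T u k = ((k:ℝ)*p k*u - p k) + p k*(1-u)^k := fun k => by
      simp only [hT_def]; ring
    have e2 : ∑' k, T u k = (∑' k:ℕ, ((k:ℝ)*p k*u - p k)) + ∑' k:ℕ, p k*(1-u)^k := by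
      rw [tsum_congr e1]
      exact Summable.tsum_add (s1.sub hp_summable) s3
    rw [Summable.tsum_sub s1 hp_summable, tsum_mul_right, hmean, hp_total] at e2
    rw [hφ (1-u)] at *
    linarith [e2.le, e2.ge]
  -- identity: 1 - φ(1-u) = ∑ p k (1 - (1-u)^k)  and positivity
  have hG_sum : ∀ u:ℝ, 0 ≤ u → u ≤ 1 → Summable (fun k => p k * (1 - (1-u)^k)) := by
    intro u h0 h1
    have s3 := hpow_sum (1-u) (by linarith) (by linarith)
    exact (hp_summable.sub s3).congr (fun k => by ring)
  have hG_nn : ∀ u:ℝ, 0 ≤ u → u ≤ 1 → ∀ k:ℕ, 0 ≤ p k * (1 - (1-u)^k) := by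
    intro u h0 h1 k
    have : (1-u)^k ≤ 1 := pow_le_one₀ (by linarith) (by linarith)
    exact mul_nonneg (hp_nonneg k) (by linarith)
  have hGf : ∀ u:ℝ, 0 ≤ u → u ≤ 1 → 1 - φ (1-u) = ∑' k, p k * (1 - (1-u)^k) := by
    intro u h0 h1
    have s3 := hpow_sum (1-u) (by linarith) (by linarith)
    have e : ∑' k:ℕ, p k * (1 - (1-u)^k) = (∑' k, p k) - ∑' k:ℕ, p k * (1-u)^k := by
      rw [← Summable.tsum_sub hp_summable s3]
      exact tsum_congr (fun k => by ring)
    rw [e, hp_total, hφ (1-u)]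
  have hGpos : ∀ u:ℝ, 0 < u → u ≤ 1 → 0 < 1 - φ (1-u) := by
    intro u h0 h1
    rw [hGf u h0.le h1]
    have hmlt : (1-u)^m < 1 := by
      apply pow_lt_one₀ (by linarith) (by linarith) (by omega)
    have hterm : 0 < p m * (1 - (1-u)^m) := mul_pos hmpos (by linarith)
    exact lt_of_lt_of_le hterm (Summable.le_tsum (hG_sum u h0.le h1) m
      (fun j _ => hG_nn u h0.le h1 j))
  -- the sequence
  set u : ℕ → ℝ := fun n => 1 - φ^[n] 0 with hu_def
  have hu0 : u 0 = 1 := by simp [hu_def]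
  have hrec : ∀ n, u (n+1) = 1 - φ (1 - u n) := by
    intro n
    simp only [hu_def, Function.iterate_succ_apply', sub_sub_cancel]
  have hmem : ∀ n, 0 < u n ∧ u n ≤ 1 := by
    intro n
    induction n with
    | zero => rw [hu0]; norm_num
    | succ n ih =>
      obtain ⟨h0, h1⟩ := ih
      constructor
      · rw [hrec]; exact hGpos _ h0 h1
      · rw [hrec, hDf _ h0.le h1]
        have := tsum_nonneg (L := SummationFilter.unconditional ℕ) (hT_nn _ h0.le h1)
        linarith
  have hDrec : ∀ n, u (n+1) = u n - ∑' k, T (u n) k := by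
    intro n
    rw [hrec, hDf _ (hmem n).1.le (hmem n).2]
  have hanti : Antitone u := by
    apply antitone_nat_of_succ_le
    intro n
    rw [hDrec n]
    have := tsum_nonneg (L := SummationFilter.unconditional ℕ) (hT_nn _ (hmem n).1.le (hmem n).2)
    linarith
  -- the limit L
  set L : ℝ := ⨅ n, u n with hL_def
  have hbdd : BddBelow (Set.range u) := ⟨0, by rintro x ⟨n, rfl⟩; exact (hmem n).1.le⟩
  have hLtend : Tendsto u atTop (𝓝 L) := tendsto_atTop_ciInf hanti hbdd
  have hL0 : 0 ≤ L := le_ciInf fun n => (hmem n).1.le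
  have hL1 : L ≤ 1 := le_trans (ciInf_le ⟨0, by rintro x ⟨n, rfl⟩; exact (hmem n).1.le⟩ 0) hu0.le
  -- L = 0 via dominated convergence
  have hDC1 : Tendsto (fun n => ∑' k:ℕ, p k * (1 - (1 - u n)^k)) atTop
      (𝓝 (∑' k:ℕ, p k * (1 - (1-L)^k))) := by
    apply tendsto_tsum_of_dominated_convergence (bound := fun k:ℕ => (k:ℝ) * p k) hmean_summable
    · intro k
      have hc : Continuous fun x:ℝ => p k * (1 - (1-x)^k) :=
        continuous_const.mul (continuous_const.sub ((continuous_const.sub continuous_id).pow k))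
      exact (hc.tendsto L).comp hLtend
    · apply Eventually.of_forall
      intro n k
      rw [Real.norm_eq_abs, abs_of_nonneg (hG_nn _ (hmem n).1.le (hmem n).2 k)]
      have hb := aux_bernoulli k (by linarith [(hmem n).1] : 1 - u n ≤ 1)
      -- careful: bernoulli at (u n): 1 - k * u n ≤ (1 - u n)^k
      have hb2 : 1 - (k:ℝ) * u n ≤ (1 - u n)^k := aux_bernoulli k (hmem n).2
      have : 1 - (1 - u n)^k ≤ (k:ℝ) * u n := by linarith
      calc p k * (1 - (1 - u n)^k) ≤ p k * ((k:ℝ) * u n) :=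
            mul_le_mul_of_nonneg_left this (hp_nonneg k)
        _ ≤ p k * ((k:ℝ) * 1) := by
            apply mul_le_mul_of_nonneg_left _ (hp_nonneg k)
            exact mul_le_mul_of_nonneg_left (hmem n).2 (Nat.cast_nonneg k)
        _ = (k:ℝ) * p k := by ring
  have hLzero : L = 0 := by
    have h1 : Tendsto (fun n => u (n+1)) atTop (𝓝 L) := hLtend.comp (tendsto_add_atTop_nat 1)
    have h2 : Tendsto (fun n => u (n+1)) atTop (𝓝 (∑' k:ℕ, p k * (1 - (1-L)^k))) := by
      apply hDC1.congr
      intro n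
      rw [hrec, hGf _ (hmem n).1.le (hmem n).2]
    have hfix : L = ∑' k:ℕ, p k * (1 - (1-L)^k) := tendsto_nhds_unique h1 h2
    have hD0 : ∑' k, T L k = 0 := by
      have e1 := hDf L hL0 hL1
      have e2 := hGf L hL0 hL1
      linarith [hfix]
    have h3 : T L m ≤ 0 := hD0 ▸ Summable.le_tsum (hT_sum L hL0 hL1) m (fun j _ => hT_nn L hL0 hL1 j)
    have h4 : p m * L^2 ≤ T L m := by
      simp only [hT_def]
      exact mul_le_mul_of_nonneg_left (aux_strict m hm2 hL0 hL1) (hp_nonneg m)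
    have h5 : L^2 ≤ 0 := by nlinarith
    have h6 : L^2 = 0 := le_antisymm h5 (sq_nonneg L)
    exact pow_eq_zero_iff (by norm_num : (2:ℕ) ≠ 0) |>.mp h6
  rw [hLzero] at hLtend
  -- R n := D(u n)/(u n)^2 → σ2/2
  have hRtend : Tendsto (fun n => (∑' k, T (u n) k) / (u n)^2) atTop (𝓝 (σ2/2)) := by
    have key : Tendsto (fun n => ∑' k, T (u n) k / (u n)^2) atTop
        (𝓝 (∑' k:ℕ, (k:ℝ)*((k:ℝ)-1)*p k / 2)) := by
      apply tendsto_tsum_of_dominated_convergence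
        (bound := fun k:ℕ => (k:ℝ)*((k:ℝ)-1)*p k / 2) (hσ_summable.div_const 2)
      · intro k
        have hup : ∀ n, T (u n) k / (u n)^2 ≤ (k:ℝ)*((k:ℝ)-1)*p k / 2 := by
          intro n
          have hu2 : (0:ℝ) < (u n)^2 := pow_pos (hmem n).1 2
          rw [div_le_iff₀ hu2]
          calc T (u n) k ≤ (k:ℝ)*((k:ℝ)-1)*p k * ((u n)^2/2) :=
                hT_le _ (hmem n).1.le (hmem n).2 k
            _ = (k:ℝ)*((k:ℝ)-1)*p k / 2 * (u n)^2 := by ring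
        have hlow : ∀ n, (k:ℝ)*((k:ℝ)-1)*p k/2
            - (k:ℝ)*((k:ℝ)-1)*((k:ℝ)-2)*p k/6 * u n ≤ T (u n) k / (u n)^2 := by
          intro n
          have hu2 : (0:ℝ) < (u n)^2 := pow_pos (hmem n).1 2
          rw [le_div_iff₀ hu2]
          have hal := aux_lower k (hmem n).1.le (hmem n).2
          have h1 : p k * ((k:ℝ)*((k:ℝ)-1)/2 * (u n)^2
              - (k:ℝ)*((k:ℝ)-1)*((k:ℝ)-2)/6 * (u n)^3) ≤ T (u n) k := by
            simp only [hT_def]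
            apply mul_le_mul_of_nonneg_left _ (hp_nonneg k)
            linarith
          calc ((k:ℝ)*((k:ℝ)-1)*p k/2 - (k:ℝ)*((k:ℝ)-1)*((k:ℝ)-2)*p k/6 * u n) * (u n)^2
              = p k * ((k:ℝ)*((k:ℝ)-1)/2 * (u n)^2
                - (k:ℝ)*((k:ℝ)-1)*((k:ℝ)-2)/6 * (u n)^3) := by ring
            _ ≤ T (u n) k := h1
        have hlowt : Tendsto (fun n => (k:ℝ)*((k:ℝ)-1)*p k/2
            - (k:ℝ)*((k:ℝ)-1)*((k:ℝ)-2)*p k/6 * u n) atTop (𝓝 ((k:ℝ)*((k:ℝ)-1)*p k/2)) := by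
          have := tendsto_const_nhds (x := (k:ℝ)*((k:ℝ)-1)*p k/2) (f := atTop (α := ℕ)) |>.sub
            (hLtend.const_mul ((k:ℝ)*((k:ℝ)-1)*((k:ℝ)-2)*p k/6))
          simpa [mul_comm] using this
        exact tendsto_of_tendsto_of_tendsto_of_le_of_le hlowt tendsto_const_nhds hlow hup
      · apply Eventually.of_forall
        intro n k
        have hu2 : (0:ℝ) < (u n)^2 := pow_pos (hmem n).1 2
        have hnn : 0 ≤ T (u n) k / (u n)^2 :=
          div_nonneg (hT_nn _ (hmem n).1.le (hmem n).2 k) hu2.le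
        rw [Real.norm_eq_abs, abs_of_nonneg hnn, div_le_iff₀ hu2]
        calc T (u n) k ≤ (k:ℝ)*((k:ℝ)-1)*p k * ((u n)^2/2) :=
              hT_le _ (hmem n).1.le (hmem n).2 k
          _ = (k:ℝ)*((k:ℝ)-1)*p k / 2 * (u n)^2 := by ring
    have e1 : ∀ n, ∑' k, T (u n) k / (u n)^2 = (∑' k, T (u n) k) / (u n)^2 :=
      fun n => tsum_div_const
    have e2 : ∑' k:ℕ, (k:ℝ)*((k:ℝ)-1)*p k / 2 = σ2 / 2 := by rw [tsum_div_const, ← hσ]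
    rw [e2] at key
    exact key.congr e1
  -- ratio u n / u (n+1) → 1
  have hune : ∀ n, u n ≠ 0 := fun n => (hmem n).1.ne'
  have hratio : Tendsto (fun n => u (n+1) / u n) atTop (𝓝 1) := by
    have e : ∀ n, u (n+1)/u n = 1 - u n * ((∑' k, T (u n) k)/(u n)^2) := by
      intro n
      have h1 := hune n
      have h2 : u n * ((∑' k, T (u n) k)/(u n)^2) = (∑' k, T (u n) k)/u n := by
        rw [pow_two]
        rw [eq_div_iff h1]
        field_simp
      rw [hDrec n, sub_div, div_self h1, h2]
    have ht : Tendsto (fun n => 1 - u n * ((∑' k, T (u n) k)/(u n)^2)) atTop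
        (𝓝 (1 - 0 * (σ2/2))) := tendsto_const_nhds.sub (hLtend.mul hRtend)
    rw [zero_mul, sub_zero] at ht
    exact ht.congr (fun n => (e n).symm)
  have hratio' : Tendsto (fun n => u n / u (n+1)) atTop (𝓝 1) := by
    have h := hratio.inv₀ one_ne_zero
    rw [inv_one] at h
    exact h.congr (fun n => by rw [inv_div])
  -- differences of inverses
  have hdiff : Tendsto (fun n => (u (n+1))⁻¹ - (u n)⁻¹) atTop (𝓝 (σ2/2)) := by
    have e : ∀ n, (u (n+1))⁻¹ - (u n)⁻¹
        = ((∑' k, T (u n) k)/(u n)^2) * (u n / u (n+1)) := by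
      intro n
      have h1 := hune n
      have h2 := hune (n+1)
      have h3 : ∑' k, T (u n) k = u n - u (n+1) := by linarith [hDrec n]
      rw [h3]
      field_simp
    have ht : Tendsto (fun n => ((∑' k, T (u n) k)/(u n)^2) * (u n / u (n+1))) atTop
        (𝓝 (σ2/2 * 1)) := hRtend.mul hratio'
    rw [mul_one] at ht
    exact ht.congr (fun n => (e n).symm)
  -- Cesàro
  have hces : Tendsto (fun n:ℕ => (n:ℝ)⁻¹ * ((u n)⁻¹ - (u 0)⁻¹)) atTop (𝓝 (σ2/2)) := by
    have h := hdiff.cesaro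
    apply h.congr
    intro n
    rw [Finset.sum_range_sub (fun i => (u i)⁻¹)]
  have hzero' : Tendsto (fun n:ℕ => (n:ℝ)⁻¹ * (u 0)⁻¹) atTop (𝓝 0) := by
    simpa using (tendsto_inv_atTop_nhds_zero_nat (𝕜 := ℝ)).mul_const (u 0)⁻¹
  have hinv : Tendsto (fun n:ℕ => (n:ℝ)⁻¹ * (u n)⁻¹) atTop (𝓝 (σ2/2)) := by
    have h := hces.add hzero'
    rw [add_zero] at h
    exact h.congr (fun n => by ring)
  -- conclude
  have hne : σ2/2 ≠ 0 := by positivity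
  have hfin := hinv.inv₀ hne
  have e2 : (σ2/2)⁻¹ = 2/σ2 := by rw [inv_div]
  rw [e2] at hfin
  show Tendsto (fun n : ℕ => (n : ℝ) * u n) atTop (𝓝 (2 / σ2))
  exact hfin.congr (fun n => by rw [mul_inv, inv_inv, inv_inv])
end

section
/- (Heathcote–Seneta–Vere-Jones subcritical limit.) Let (p_k)_{k≥0} be a probability distribution on the nonnegative integers with mean μ := Σ_{k≥0} k·p_k satisfying 0 < μ < 1, and suppose the L log L condition holds: Σ_{k≥1} p_k·k·log k < ∞. Let φ(z) = Σ_{k≥0} p_k z^k be its probability generating function. Then the limit lim_{n→∞} (1 - φ^{[n]}(0))/μ^n exists and is a strictly positive real number; i.e., the survival probability of the subcritical Galton–Watson process up to generation n is asymptotically a positive constant times μ^n. -/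
open Filter

section CopyAux

/-- Bernoulli-type: `1 - (1-s)^k ≤ k s` for `s ≤ 1` (actually `s ≥ -1` suffices via `-2 ≤ -s`). -/
lemma hsvj_bernoulli (s : ℝ) (hs : s ≤ 2) (k : ℕ) : 1 - (1 - s) ^ k ≤ (k : ℝ) * s := by
  have h := one_add_mul_le_pow (a := -s) (by linarith) k
  have : (1 + (-s)) ^ k = (1 - s) ^ k := by ring_nf
  nlinarith [h]

/-- Key elementary estimate: with `e k = k s - (1 - (1-s)^k)`,
`0 ≤ e k ≤ s * k * min 1 (k s)`. -/
lemma hsvj_key (s : ℝ) (hs0 : 0 ≤ s) (hs1 : s ≤ 1) (k : ℕ) :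
    0 ≤ (k : ℝ) * s - (1 - (1 - s) ^ k) ∧
      (k : ℝ) * s - (1 - (1 - s) ^ k) ≤ s * k * min 1 ((k : ℝ) * s) := by
  induction k with
  | zero => simp
  | succ k ih =>
    have hx0 : (0:ℝ) ≤ 1 - s := by linarith
    have hxk0 : 0 ≤ (1 - s) ^ k := pow_nonneg hx0 k
    have hxk1 : (1 - s) ^ k ≤ 1 := pow_le_one₀ hx0 (by linarith)
    have hrec : ((k + 1 : ℕ) : ℝ) * s - (1 - (1 - s) ^ (k + 1))
        = ((k : ℝ) * s - (1 - (1 - s) ^ k)) + s * (1 - (1 - s) ^ k) := by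
      push_cast; ring
    have hmin : 1 - (1 - s) ^ k ≤ min 1 ((k : ℝ) * s) :=
      le_min (by linarith) (hsvj_bernoulli s (by linarith) k)
    have hmin0 : 0 ≤ min 1 ((k : ℝ) * s) :=
      le_min zero_le_one (mul_nonneg (Nat.cast_nonneg k) hs0)
    have hmono : min 1 ((k : ℝ) * s) ≤ min 1 (((k + 1 : ℕ) : ℝ) * s) := by
      refine min_le_min le_rfl ?_
      push_cast
      nlinarith
    constructor
    · rw [hrec]
      nlinarith [ih.1]
    · rw [hrec]
      have h1 : ((k : ℝ) * s - (1 - (1 - s) ^ k)) + s * (1 - (1 - s) ^ k)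
          ≤ s * k * min 1 ((k : ℝ) * s) + s * min 1 ((k : ℝ) * s) := by
        have := ih.2
        nlinarith [hmin, hs0]
      have h2 : s * k * min 1 ((k : ℝ) * s) + s * min 1 ((k : ℝ) * s)
          = s * ((k : ℕ) + 1 : ℝ) * min 1 ((k : ℝ) * s) := by ring
      have h3 : s * ((k : ℕ) + 1 : ℝ) * min 1 ((k : ℝ) * s)
          ≤ s * ((k : ℕ) + 1 : ℝ) * min 1 (((k + 1 : ℕ) : ℝ) * s) := by
        refine mul_le_mul_of_nonneg_left hmono (by positivity)
      calc _ ≤ s * k * min 1 ((k : ℝ) * s) + s * min 1 ((k : ℝ) * s) := h1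
        _ = _ := h2
        _ ≤ s * ((k : ℕ) + 1 : ℝ) * min 1 (((k + 1 : ℕ) : ℝ) * s) := h3
        _ = s * ((k + 1 : ℕ) : ℝ) * min 1 (((k + 1 : ℕ) : ℝ) * s) := by push_cast; ring

lemma hsvj_geom_shift {μ : ℝ} (hμ0 : 0 < μ) (hμ1 : μ < 1) (N : ℕ) :
    Summable (fun n : ℕ => μ ^ (n - N)) ∧
      ∑' n : ℕ, μ ^ (n - N) ≤ (N : ℝ) + (1 - μ)⁻¹ := by
  have hgeo : Summable (fun n : ℕ => μ ^ n) := summable_geometric_of_lt_one hμ0.le hμ1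
  have hsum : Summable (fun n : ℕ => μ ^ (n - N)) := by
    rw [← summable_nat_add_iff N]
    simpa using hgeo
  refine ⟨hsum, ?_⟩
  have := Summable.sum_add_tsum_nat_add (f := fun n : ℕ => μ ^ (n - N)) N hsum
  rw [← this]
  have h1 : ∑ i ∈ Finset.range N, μ ^ (i - N) ≤ (N : ℝ) := by
    calc ∑ i ∈ Finset.range N, μ ^ (i - N) ≤ ∑ i ∈ Finset.range N, 1 := by
          refine Finset.sum_le_sum fun i _ => pow_le_one₀ hμ0.le hμ1.le
      _ = (N : ℝ) := by simp
  have h2 : ∑' i : ℕ, μ ^ (i + N - N) = (1 - μ)⁻¹ := by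
    simpa using tsum_geometric_of_lt_one hμ0.le hμ1
  linarith [h1, h2.le, h2.ge]

lemma hsvj_min_bound {μ : ℝ} (hμ0 : 0 < μ) (hμ1 : μ < 1) (k n : ℕ) :
    min 1 ((k : ℝ) * μ ^ n) ≤ μ ^ (n - ⌈Real.log k / (-Real.log μ)⌉₊) := by
  set N := ⌈Real.log k / (-Real.log μ)⌉₊ with hN
  rcases lt_or_ge n N with h | h
  · have : n - N = 0 := Nat.sub_eq_zero_of_le h.le
    rw [this, pow_zero]
    exact min_le_left _ _
  · -- k * μ^N ≤ 1
    have hlogμ : 0 < -Real.log μ := by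
      have := Real.log_neg hμ0 hμ1
      linarith
    have hkN : (k : ℝ) * μ ^ N ≤ 1 := by
      rcases Nat.eq_zero_or_pos k with rfl | hk
      · simp
      · have hk1 : (1 : ℝ) ≤ (k : ℝ) := by exact_mod_cast hk
        have hceil : Real.log k / (-Real.log μ) ≤ (N : ℝ) := Nat.le_ceil _
        have hlog : (N : ℝ) * Real.log μ ≤ -Real.log k := by
          rw [div_le_iff₀ hlogμ] at hceil
          nlinarith
        have hpow : μ ^ N = Real.exp ((N : ℝ) * Real.log μ) := by
          rw [← Real.log_pow, Real.exp_log (pow_pos hμ0 N)]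
        have : μ ^ N ≤ Real.exp (-Real.log k) := by
          rw [hpow]; exact Real.exp_le_exp.2 hlog
        have hexp : Real.exp (-Real.log k) = (k : ℝ)⁻¹ := by
          rw [Real.exp_neg, Real.exp_log (by positivity)]
        rw [hexp] at this
        calc (k : ℝ) * μ ^ N ≤ (k : ℝ) * (k : ℝ)⁻¹ :=
              mul_le_mul_of_nonneg_left this (by positivity)
          _ = 1 := mul_inv_cancel₀ (by positivity)
    have hsplit : μ ^ n = μ ^ N * μ ^ (n - N) := by
      rw [← pow_add, Nat.add_sub_cancel' h]
    calc min 1 ((k : ℝ) * μ ^ n) ≤ (k : ℝ) * μ ^ n := min_le_right _ _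
      _ = (k : ℝ) * μ ^ N * μ ^ (n - N) := by rw [hsplit]; ring
      _ ≤ 1 * μ ^ (n - N) := mul_le_mul_of_nonneg_right hkN (by positivity)
      _ = μ ^ (n - N) := one_mul _

lemma hsvj_delta_summable (p : ℕ → ℝ) (hp_nonneg : ∀ k, 0 ≤ p k)
    (hmean_summable : Summable (fun k : ℕ => (k : ℝ) * p k))
    (hLlogL : Summable (fun k : ℕ => p k * (k : ℝ) * Real.log k))
    {μ : ℝ} (hμ0 : 0 < μ) (hμ1 : μ < 1) :
    Summable (fun n : ℕ => ∑' k : ℕ, p k * (k : ℝ) * min 1 ((k : ℝ) * μ ^ n)) := by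
  classical
  set F : ℕ × ℕ → ℝ := fun x => p x.1 * (x.1 : ℝ) * min 1 ((x.1 : ℝ) * μ ^ x.2) with hF
  have hF_nonneg : 0 ≤ F := by
    intro x
    exact mul_nonneg (mul_nonneg (hp_nonneg _) (Nat.cast_nonneg _))
      (le_min zero_le_one (by positivity))
  have hlogμ : 0 < -Real.log μ := by
    have := Real.log_neg hμ0 hμ1; linarith
  -- for each k, summability in n and tsum bound
  have hslice : ∀ k : ℕ, Summable (fun n => F (k, n)) ∧
      ∑' n : ℕ, F (k, n) ≤ p k * (k : ℝ) *
        ((⌈Real.log k / (-Real.log μ)⌉₊ : ℝ) + (1 - μ)⁻¹) := by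
    intro k
    set N := ⌈Real.log k / (-Real.log μ)⌉₊ with hN
    obtain ⟨hgs, hgt⟩ := hsvj_geom_shift hμ0 hμ1 N
    have hbound : ∀ n : ℕ, F (k, n) ≤ p k * (k : ℝ) * μ ^ (n - N) := fun n =>
      mul_le_mul_of_nonneg_left (hsvj_min_bound hμ0 hμ1 k n)
        (mul_nonneg (hp_nonneg _) (Nat.cast_nonneg _))
    have hsm : Summable (fun n : ℕ => p k * (k : ℝ) * μ ^ (n - N)) := hgs.mul_left _
    have hsum : Summable (fun n => F (k, n)) :=
      Summable.of_nonneg_of_le (fun n => hF_nonneg (k, n)) hbound hsm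
    refine ⟨hsum, ?_⟩
    calc ∑' n : ℕ, F (k, n) ≤ ∑' n : ℕ, p k * (k : ℝ) * μ ^ (n - N) :=
          Summable.tsum_le_tsum hbound hsum hsm
      _ = p k * (k : ℝ) * ∑' n : ℕ, μ ^ (n - N) := tsum_mul_left
      _ ≤ p k * (k : ℝ) * ((N : ℝ) + (1 - μ)⁻¹) :=
          mul_le_mul_of_nonneg_left hgt (mul_nonneg (hp_nonneg _) (Nat.cast_nonneg _))
  -- the k-sums are summable
  have hg : Summable (fun k : ℕ => (-Real.log μ)⁻¹ * (p k * (k : ℝ) * Real.log k)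
      + (1 + (1 - μ)⁻¹) * ((k : ℝ) * p k)) :=
    (hLlogL.mul_left _).add (hmean_summable.mul_left _)
  have hksum : Summable (fun k : ℕ => ∑' n : ℕ, F (k, n)) := by
    refine Summable.of_nonneg_of_le
      (fun k => tsum_nonneg fun n => hF_nonneg (k, n)) (fun k => ?_) hg
    have hceil : (⌈Real.log k / (-Real.log μ)⌉₊ : ℝ) ≤ Real.log k / (-Real.log μ) + 1 := by
      refine (Nat.ceil_lt_add_one ?_).le
      rcases Nat.eq_zero_or_pos k with rfl | hk
      · simp
      · have : (1:ℝ) ≤ (k:ℝ) := by exact_mod_cast hk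
        have := Real.log_nonneg this
        positivity
    calc ∑' n : ℕ, F (k, n) ≤ p k * (k : ℝ) *
          ((⌈Real.log k / (-Real.log μ)⌉₊ : ℝ) + (1 - μ)⁻¹) := (hslice k).2
      _ ≤ p k * (k : ℝ) * (Real.log k / (-Real.log μ) + 1 + (1 - μ)⁻¹) := by
          refine mul_le_mul_of_nonneg_left (by linarith)
            (mul_nonneg (hp_nonneg _) (Nat.cast_nonneg _))
      _ = (-Real.log μ)⁻¹ * (p k * (k : ℝ) * Real.log k)
          + (1 + (1 - μ)⁻¹) * ((k : ℝ) * p k) := by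
          rw [div_eq_mul_inv]
          ring
  have hFsum : Summable F :=
    (summable_prod_of_nonneg hF_nonneg).2 ⟨fun k => (hslice k).1, hksum⟩
  have hFswap : Summable (fun x : ℕ × ℕ => F x.swap) := hFsum.prod_symm
  have := ((summable_prod_of_nonneg (f := fun x : ℕ × ℕ => F x.swap)
    (fun x => hF_nonneg x.swap)).1 hFswap).2
  simpa [hF] using this
end CopyAux

/-- Heathcote–Seneta–Vere-Jones: for a subcritical Galton–Watson process with mean
`μ ∈ (0,1)` satisfying the `L log L` condition, `(1 - φ^[n](0))/μⁿ` converges to a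
strictly positive limit. -/
theorem heathcote_seneta_vere_jones (p : ℕ → ℝ)
    (hp_nonneg : ∀ k, 0 ≤ p k) (hp_summable : Summable p) (hp_total : ∑' k : ℕ, p k = 1)
    (μ : ℝ)
    (hmean_summable : Summable (fun k : ℕ => (k : ℝ) * p k))
    (hmean : ∑' k : ℕ, (k : ℝ) * p k = μ)
    (hμ0 : 0 < μ) (hμ1 : μ < 1)
    (hLlogL : Summable (fun k : ℕ => p k * (k : ℝ) * Real.log k))
    (φ : ℝ → ℝ) (hφ : ∀ z, φ z = ∑' k : ℕ, p k * z ^ k) :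
    ∃ L : ℝ, 0 < L ∧
      Tendsto (fun n : ℕ => (1 - φ^[n] 0) / μ ^ n) atTop (nhds L) := by
  classical
  set q : ℕ → ℝ := fun n => 1 - φ^[n] 0 with hq_def
  set r : ℕ → ℝ := fun n => q n / μ ^ n with hr_def
  have hμn : ∀ n : ℕ, (0:ℝ) < μ ^ n := fun n => pow_pos hμ0 n
  -- summability of the power series on [0,1]
  have hsum_pow : ∀ z : ℝ, 0 ≤ z → z ≤ 1 → Summable (fun k : ℕ => p k * z ^ k) := by
    intro z hz0 hz1
    refine hp_summable.of_nonneg_of_le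
      (fun k => mul_nonneg (hp_nonneg k) (pow_nonneg hz0 k)) (fun k => ?_)
    nlinarith [pow_le_one₀ hz0 hz1 (n := k), hp_nonneg k, pow_nonneg hz0 k]
  have hφ_nonneg : ∀ z : ℝ, 0 ≤ z → z ≤ 1 → 0 ≤ φ z := by
    intro z hz0 hz1
    rw [hφ z]
    exact tsum_nonneg fun k => mul_nonneg (hp_nonneg k) (pow_nonneg hz0 k)
  -- there is K ≥ 1 with p K > 0
  have hK : ∃ K : ℕ, 0 < (K : ℝ) * p K := by
    by_contra h
    push_neg at h
    have hz : ∀ k : ℕ, (k : ℝ) * p k = 0 := fun k =>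
      le_antisymm (h k) (mul_nonneg (Nat.cast_nonneg k) (hp_nonneg k))
    have : μ = 0 := by
      rw [← hmean]
      simp [hz]
    linarith
  have hφ_lt_one : ∀ z : ℝ, 0 ≤ z → z < 1 → φ z < 1 := by
    intro z hz0 hz1
    obtain ⟨K, hKpos⟩ := hK
    have hKne : K ≠ 0 := by
      rintro rfl; simp at hKpos
    have hpK : 0 < p K := by
      rcases Nat.eq_zero_or_pos K with rfl | hk
      · simp at hKpos
      · have : (0:ℝ) < (K : ℝ) := by exact_mod_cast hk
        nlinarith
    rw [hφ z, ← hp_total]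
    refine Summable.tsum_lt_tsum_of_nonneg (i := K)
      (fun k => mul_nonneg (hp_nonneg k) (pow_nonneg hz0 k))
      (fun k => ?_) ?_ hp_summable
    · nlinarith [pow_le_one₀ hz0 hz1.le (n := k), hp_nonneg k]
    · have : z ^ K < 1 := pow_lt_one₀ hz0 hz1 hKne
      nlinarith
  -- positivity of q
  have hq01 : ∀ n : ℕ, 0 < q n ∧ q n ≤ 1 := by
    intro n
    induction n with
    | zero => simp [hq_def]
    | succ n ih =>
      have hiter : φ^[n + 1] 0 = φ (φ^[n] 0) := Function.iterate_succ_apply' φ n 0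
      have ha0 : 0 ≤ φ^[n] 0 := by
        have := ih.2; simp only [hq_def] at this; linarith
      have ha1 : φ^[n] 0 < 1 := by
        have := ih.1; simp only [hq_def] at this; linarith
      have h1 : 0 ≤ φ (φ^[n] 0) := hφ_nonneg _ ha0 ha1.le
      have h2 : φ (φ^[n] 0) < 1 := hφ_lt_one _ ha0 ha1
      constructor
      · simp only [hq_def, hiter]; linarith
      · simp only [hq_def, hiter]; linarith
  -- the basic recursion
  have hq_rec : ∀ n : ℕ, q (n + 1) = 1 - φ (1 - q n) := by
    intro n
    have hiter : φ^[n + 1] 0 = φ (φ^[n] 0) := Function.iterate_succ_apply' φ n 0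
    have : 1 - q n = φ^[n] 0 := by simp [hq_def]
    rw [hq_def]
    simp only [hiter, this, sub_sub_cancel]
  -- 1 - φ z as a series
  have hone_sub : ∀ z : ℝ, 0 ≤ z → z ≤ 1 →
      1 - φ z = ∑' k : ℕ, p k * (1 - z ^ k) := by
    intro z hz0 hz1
    calc 1 - φ z = (∑' k : ℕ, p k) - ∑' k : ℕ, p k * z ^ k := by rw [hφ z, hp_total]
      _ = ∑' k : ℕ, (p k - p k * z ^ k) :=
          (Summable.tsum_sub hp_summable (hsum_pow z hz0 hz1)).symm
      _ = ∑' k : ℕ, p k * (1 - z ^ k) := tsum_congr fun k => by ring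
  -- upper bound for one step
  have hstep_upper : ∀ s : ℝ, 0 ≤ s → s ≤ 1 → 1 - φ (1 - s) ≤ μ * s := by
    intro s hs0 hs1
    have hz0 : (0:ℝ) ≤ 1 - s := by linarith
    have hz1 : (1:ℝ) - s ≤ 1 := by linarith
    rw [hone_sub _ hz0 hz1]
    have hB : Summable (fun k : ℕ => p k * (1 - (1 - s) ^ k)) := by
      refine (hp_summable.sub (hsum_pow _ hz0 hz1)).congr fun k => by ring
    have hA : Summable (fun k : ℕ => p k * ((k : ℝ) * s)) := by
      refine (hmean_summable.mul_right s).congr fun k => by ring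
    have hle : ∑' k : ℕ, p k * (1 - (1 - s) ^ k) ≤ ∑' k : ℕ, p k * ((k : ℝ) * s) := by
      refine Summable.tsum_le_tsum (fun k => ?_) hB hA
      exact mul_le_mul_of_nonneg_left (hsvj_bernoulli s (by linarith) k) (hp_nonneg k)
    have heq : ∑' k : ℕ, p k * ((k : ℝ) * s) = μ * s := by
      rw [show (fun k : ℕ => p k * ((k : ℝ) * s)) = fun k : ℕ => ((k : ℝ) * p k) * s by
        funext k; ring, tsum_mul_right, hmean, mul_comm]
    linarith [hle, heq.le, heq.ge]
  have hq_step_upper : ∀ n : ℕ, q (n + 1) ≤ μ * q n := by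
    intro n
    rw [hq_rec n]
    exact hstep_upper _ (hq01 n).1.le (hq01 n).2
  have hq_le_pow : ∀ n : ℕ, q n ≤ μ ^ n := by
    intro n
    induction n with
    | zero => simp [hq_def]
    | succ n ih =>
      calc q (n + 1) ≤ μ * q n := hq_step_upper n
        _ ≤ μ * μ ^ n := by nlinarith
        _ = μ ^ (n + 1) := by rw [pow_succ]; ring
  -- δ
  set δ : ℝ → ℝ := fun s => ∑' k : ℕ, p k * (k : ℝ) * min 1 ((k : ℝ) * s) with hδ_def
  have hkp_summable : Summable (fun k : ℕ => p k * (k : ℝ)) :=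
    hmean_summable.congr fun k => by ring
  have hδ_term_nonneg : ∀ s : ℝ, 0 ≤ s → ∀ k : ℕ,
      0 ≤ p k * (k : ℝ) * min 1 ((k : ℝ) * s) := fun s hs k =>
    mul_nonneg (mul_nonneg (hp_nonneg k) (Nat.cast_nonneg k))
      (le_min zero_le_one (by positivity))
  have hδ_summable : ∀ s : ℝ, 0 ≤ s →
      Summable (fun k : ℕ => p k * (k : ℝ) * min 1 ((k : ℝ) * s)) := by
    intro s hs
    refine Summable.of_nonneg_of_le (hδ_term_nonneg s hs) (fun k => ?_) hkp_summable
    have h1 : min 1 ((k : ℝ) * s) ≤ 1 := min_le_left _ _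
    calc p k * (k : ℝ) * min 1 ((k : ℝ) * s) ≤ p k * (k : ℝ) * 1 :=
          mul_le_mul_of_nonneg_left h1 (mul_nonneg (hp_nonneg k) (Nat.cast_nonneg k))
      _ = p k * (k : ℝ) := mul_one _
  have hδ_nonneg : ∀ s : ℝ, 0 ≤ s → 0 ≤ δ s := fun s hs =>
    tsum_nonneg (hδ_term_nonneg s hs)
  have hδ_mono : ∀ s t : ℝ, 0 ≤ s → s ≤ t → δ s ≤ δ t := by
    intro s t hs hst
    refine Summable.tsum_le_tsum (fun k => ?_) (hδ_summable s hs) (hδ_summable t (hs.trans hst))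
    refine mul_le_mul_of_nonneg_left (min_le_min le_rfl ?_)
      (mul_nonneg (hp_nonneg k) (Nat.cast_nonneg k))
    nlinarith [Nat.cast_nonneg (α := ℝ) k]
  -- lower bound for one step
  have hstep_lower : ∀ s : ℝ, 0 ≤ s → s ≤ 1 →
      μ * s - s * δ s ≤ 1 - φ (1 - s) := by
    intro s hs0 hs1
    have hz0 : (0:ℝ) ≤ 1 - s := by linarith
    have hz1 : (1:ℝ) - s ≤ 1 := by linarith
    have hA : Summable (fun k : ℕ => p k * ((k : ℝ) * s)) :=
      (hmean_summable.mul_right s).congr fun k => by ring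
    have hB : Summable (fun k : ℕ => p k * (1 - (1 - s) ^ k)) :=
      (hp_summable.sub (hsum_pow _ hz0 hz1)).congr fun k => by ring
    have hC : Summable (fun k : ℕ => p k * ((k : ℝ) * s - (1 - (1 - s) ^ k))) :=
      (hA.sub hB).congr fun k => by ring
    have hD : Summable (fun k : ℕ => p k * (s * (k : ℝ) * min 1 ((k : ℝ) * s))) :=
      ((hδ_summable s hs0).mul_left s).congr fun k => by ring
    have heqA : ∑' k : ℕ, p k * ((k : ℝ) * s) = μ * s := by
      rw [show (fun k : ℕ => p k * ((k : ℝ) * s)) = fun k : ℕ => ((k : ℝ) * p k) * s by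
        funext k; ring, tsum_mul_right, hmean, mul_comm]
    have key : ∑' k : ℕ, p k * ((k : ℝ) * s - (1 - (1 - s) ^ k))
        ≤ s * δ s := by
      calc ∑' k : ℕ, p k * ((k : ℝ) * s - (1 - (1 - s) ^ k))
          ≤ ∑' k : ℕ, p k * (s * (k : ℝ) * min 1 ((k : ℝ) * s)) := by
            refine Summable.tsum_le_tsum (fun k => ?_) hC hD
            exact mul_le_mul_of_nonneg_left (hsvj_key s hs0 hs1 k).2 (hp_nonneg k)
        _ = s * δ s := by
            rw [hδ_def, ← tsum_mul_left]
            exact tsum_congr fun k => by ring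
    have hsplit : ∑' k : ℕ, p k * ((k : ℝ) * s - (1 - (1 - s) ^ k))
        = μ * s - (1 - φ (1 - s)) := by
      rw [hone_sub _ hz0 hz1, ← heqA, ← Summable.tsum_sub hA hB]
      exact tsum_congr fun k => by ring
    rw [hsplit] at key
    linarith
  -- d n = δ(μ^n) is summable
  have hd_summable : Summable (fun n : ℕ => δ (μ ^ n)) := by
    have := hsvj_delta_summable p hp_nonneg hmean_summable hLlogL hμ0 hμ1
    exact this
  -- c n
  set c : ℕ → ℝ := fun n => δ (μ ^ n) / μ with hc_def
  have hc_nonneg : ∀ n, 0 ≤ c n := fun n =>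
    div_nonneg (hδ_nonneg _ (hμn n).le) hμ0.le
  have hc_summable : Summable c := by
    refine (hd_summable.mul_right μ⁻¹).congr fun n => ?_
    simp [hc_def, div_eq_mul_inv]
  -- the multiplicative one-step lower bound
  have hr_pos : ∀ n, 0 < r n := fun n => div_pos (hq01 n).1 (hμn n)
  have hr_anti : ∀ n, r (n + 1) ≤ r n := by
    intro n
    have h1 : q (n + 1) ≤ μ * q n := hq_step_upper n
    show q (n + 1) / μ ^ (n + 1) ≤ q n / μ ^ n
    rw [pow_succ, div_le_div_iff₀ (by positivity) (hμn n)]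
    nlinarith [hμn n, (hq01 n).1]
  have hr_antitone : Antitone r := antitone_nat_of_succ_le hr_anti
  have hr_step : ∀ n : ℕ, r n * (1 - c n) ≤ r (n + 1) := by
    intro n
    have hqlow : μ * q n - q n * δ (q n) ≤ q (n + 1) := by
      rw [hq_rec n]
      have := hstep_lower (q n) (hq01 n).1.le (hq01 n).2
      nlinarith [this]
    have hδq : δ (q n) ≤ δ (μ ^ n) := hδ_mono _ _ (hq01 n).1.le (hq_le_pow n)
    have hkey : q n * (μ - δ (μ ^ n)) ≤ q (n + 1) := by
      nlinarith [(hq01 n).1]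
    have heq : r n * (1 - c n) = q n * (μ - δ (μ ^ n)) / (μ ^ n * μ) := by
      show q n / μ ^ n * (1 - δ (μ ^ n) / μ) = _
      field_simp
    have heq2 : r (n + 1) = q (n + 1) / (μ ^ n * μ) := by
      show q (n + 1) / μ ^ (n + 1) = _
      rw [pow_succ]
    rw [heq, heq2]
    gcongr
  -- choose N with small tail
  have htend : Tendsto (fun i : ℕ => ∑' k : ℕ, c (k + i)) atTop (nhds 0) :=
    tendsto_sum_nat_add c
  obtain ⟨N, hN⟩ := (htend.eventually (gt_mem_nhds (by norm_num : (0:ℝ) < 1/2))).exists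
  have htail_summable : Summable (fun k : ℕ => c (k + N)) :=
    (summable_nat_add_iff N).2 hc_summable
  -- partial tail sums are ≤ 1/2
  have hpartial : ∀ t : ℕ, ∑ j ∈ Finset.range t, c (N + j) ≤ 1 / 2 := by
    intro t
    have h1 : ∑ j ∈ Finset.range t, c (N + j) ≤ ∑' k : ℕ, c (k + N) := by
      have := Summable.sum_le_tsum (Finset.range t) (fun k _ => hc_nonneg (k + N)) htail_summable
      calc ∑ j ∈ Finset.range t, c (N + j) = ∑ j ∈ Finset.range t, c (j + N) := by
            refine Finset.sum_congr rfl fun j _ => by rw [Nat.add_comm]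
        _ ≤ ∑' k : ℕ, c (k + N) := this
    linarith [hN]
  -- induction: r (N + t) ≥ r N * (1 - partial sum)
  have hind : ∀ t : ℕ, r N * (1 - ∑ j ∈ Finset.range t, c (N + j)) ≤ r (N + t) := by
    intro t
    induction t with
    | zero => simp
    | succ t ih =>
      have h1 : r (N + t) * (1 - c (N + t)) ≤ r (N + t + 1) := hr_step (N + t)
      have h2 : r (N + t) ≤ r N := hr_antitone (Nat.le_add_right N t)
      have h3 : 0 ≤ c (N + t) := hc_nonneg (N + t)
      have h4 : 0 < r (N + t) := hr_pos (N + t)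
      have hsum : ∑ j ∈ Finset.range (t + 1), c (N + j)
          = ∑ j ∈ Finset.range t, c (N + j) + c (N + t) := Finset.sum_range_succ _ _
      have : N + (t + 1) = N + t + 1 := by omega
      rw [this, hsum]
      nlinarith [ih, hpartial t]
  -- every term ≥ r N / 2 eventually
  have hlow : ∀ m : ℕ, N ≤ m → r N / 2 ≤ r m := by
    intro m hm
    obtain ⟨t, rfl⟩ := Nat.exists_eq_add_of_le hm
    have := hind t
    have hp := hpartial t
    nlinarith [hr_pos N]
  -- the limit
  have hbdd : BddBelow (Set.range r) := ⟨0, by rintro x ⟨n, rfl⟩; exact (hr_pos n).le⟩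
  have hlim : Tendsto r atTop (nhds (⨅ n, r n)) := tendsto_atTop_ciInf hr_antitone hbdd
  refine ⟨⨅ n, r n, ?_, hlim⟩
  have : r N / 2 ≤ ⨅ n, r n := by
    refine ge_of_tendsto hlim ?_
    filter_upwards [eventually_ge_atTop N] with m hm using hlow m hm
  have := hr_pos N
  linarith
end

section
/- Let (Ω, ℱ, P) be a probability space with a filtration (ℱ_n)_{n≥0}, and let (Z_n)_{n≥0} be a nonnegative-integer-valued, integrable supermartingale with respect to (ℱ_n). Suppose there exists δ > 0 such that for every n, almost surely on the event {Z_n ≥ 1} one has P(Z_{n+1} ≠ Z_n | ℱ_n) ≥ δ. Then Z_n → 0 almost surely; in particular, P(Z_n ≥ 1 for all n) = 0. -/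
open Filter MeasureTheory

/-- Abstract extinction lemma: a nonnegative-integer-valued supermartingale which, as long
as it is at least `1`, has a uniformly positive conditional probability of changing at the
next step, converges to `0` almost surely; in particular it cannot stay `≥ 1` forever. -/
theorem integer_supermartingale_extinction
    {Ω : Type*} {m0 : MeasurableSpace Ω} (P : Measure Ω) [IsProbabilityMeasure P]
    (ℱ : Filtration ℕ m0) (Z : ℕ → Ω → ℝ)
    (hsuper : Supermartingale Z ℱ P)
    (hint : ∀ n ω, ∃ m : ℕ, Z n ω = m)
    (δ : ℝ) (hδ : 0 < δ)
    (hcond : ∀ n, ∀ᵐ ω ∂P, 1 ≤ Z n ω →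
      δ ≤ (P[Set.indicator {ω' | Z (n + 1) ω' ≠ Z n ω'} (fun _ => (1 : ℝ)) | ℱ n]) ω) :
    (∀ᵐ ω ∂P, Tendsto (fun n => Z n ω) atTop (nhds 0)) ∧
      P {ω | ∀ n, 1 ≤ Z n ω} = 0 := by
  classical
  -- nonnegativity and measurability
  have hZnn : ∀ n ω, 0 ≤ Z n ω := by
    intro n ω; obtain ⟨m, hm⟩ := hint n ω; rw [hm]; positivity
  have hmeas : ∀ n, Measurable (Z n) :=
    fun n => ((hsuper.stronglyAdapted n).measurable).mono (ℱ.le n) le_rfl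
  -- replace δ by δ' = min δ (1/2)
  set δ' : ℝ := min δ (1 / 2) with hδ'def
  have hδ'0 : 0 < δ' := lt_min hδ (by norm_num)
  have hδ'1 : δ' < 1 := lt_of_le_of_lt (min_le_right _ _) (by norm_num)
  have hcond' : ∀ n, ∀ᵐ ω ∂P, 1 ≤ Z n ω →
      δ' ≤ (P[Set.indicator {ω' | Z (n + 1) ω' ≠ Z n ω'} (fun _ => (1 : ℝ)) | ℱ n]) ω := by
    intro n
    filter_upwards [hcond n] with ω h h1
    exact le_trans (min_le_left _ _) (h h1)
  -- the "change" sets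
  set D : ℕ → Set Ω := fun n => {ω | Z (n + 1) ω ≠ Z n ω} with hDdef
  have hDmeas : ∀ n, MeasurableSet (D n) :=
    fun n => (measurableSet_eq_fun (hmeas (n + 1)) (hmeas n)).compl
  -- the "constant and ≥ 1 over window" sets
  set B : ℕ → ℕ → Set Ω :=
    fun n m => {ω | 1 ≤ Z n ω ∧ ∀ k < m, Z (n + k + 1) ω = Z (n + k) ω} with hBdef
  have hBmeasF : ∀ n m, MeasurableSet[ℱ (n + m)] (B n m) := by
    intro n m
    have h1 : MeasurableSet[ℱ (n + m)] {ω | 1 ≤ Z n ω} := by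
      have : StronglyMeasurable[ℱ (n + m)] (Z n) :=
        (hsuper.stronglyAdapted n).mono (ℱ.mono (Nat.le_add_right n m))
      exact measurableSet_le measurable_const this.measurable
    have h2 : MeasurableSet[ℱ (n + m)]
        {ω | ∀ k < m, Z (n + k + 1) ω = Z (n + k) ω} := by
      have : {ω | ∀ k < m, Z (n + k + 1) ω = Z (n + k) ω} =
          ⋂ k ∈ Finset.range m, {ω | Z (n + k + 1) ω = Z (n + k) ω} := by
        ext ω; simp [Set.mem_iInter]
      rw [this]
      refine MeasurableSet.biInter (Set.to_countable _) fun k hk => ?_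
      have hk' : k < m := Finset.mem_range.mp hk
      have hm1 : StronglyMeasurable[ℱ (n + m)] (Z (n + k + 1)) :=
        (hsuper.stronglyAdapted (n + k + 1)).mono (ℱ.mono (by omega))
      have hm2 : StronglyMeasurable[ℱ (n + m)] (Z (n + k)) :=
        (hsuper.stronglyAdapted (n + k)).mono (ℱ.mono (by omega))
      exact measurableSet_eq_fun hm1.measurable hm2.measurable
    exact h1.inter h2
  have hBmeas : ∀ n m, MeasurableSet (B n m) :=
    fun n m => (ℱ.le (n + m)) _ (hBmeasF n m)
  -- on B n m, Z (n+m) = Z n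
  have hBconst : ∀ n m ω, ω ∈ B n m → Z (n + m) ω = Z n ω := by
    intro n m
    induction m with
    | zero => intro ω _; rfl
    | succ m ih =>
      intro ω hω
      have h1 : ω ∈ B n m := ⟨hω.1, fun k hk => hω.2 k (by omega)⟩
      have := hω.2 m (by omega)
      calc Z (n + (m + 1)) ω = Z (n + m + 1) ω := by ring_nf
        _ = Z (n + m) ω := this
        _ = Z n ω := ih ω h1
  -- key step estimate
  have key : ∀ n m, (P (B n (m + 1))).toReal ≤ (1 - δ') * (P (B n m)).toReal := by
    intro n m
    set f : Ω → ℝ := Set.indicator (D (n + m)) (fun _ => (1 : ℝ)) with hfdef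
    have hfint : Integrable f P := (integrable_const (1 : ℝ)).indicator (hDmeas (n + m))
    -- ∫_{B n m} condexp = P (B n m ∩ D (n+m))
    have h1 : ∫ ω in B n m, (P[f | ℱ (n + m)]) ω ∂P = (P (B n m ∩ D (n + m))).toReal := by
      rw [setIntegral_condExp (ℱ.le (n + m)) hfint (hBmeasF n m)]
      rw [hfdef, setIntegral_indicator (hDmeas (n + m))]
      simp [measure_univ, measureReal_def]
    -- lower bound for the set integral
    have h2 : δ' * (P (B n m)).toReal ≤ ∫ ω in B n m, (P[f | ℱ (n + m)]) ω ∂P := by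
      have hc : ∀ᵐ ω ∂P.restrict (B n m),
          δ' ≤ (P[f | ℱ (n + m)]) ω := by
        have hmem := ae_restrict_mem (μ := P) (hBmeas n m)
        have hae := ae_restrict_of_ae (s := B n m) (hcond' (n + m))
        filter_upwards [hmem, hae] with ω hωB hω
        exact hω (by rw [hBconst n m ω hωB]; exact hωB.1)
      have := setIntegral_mono_ae_restrict
        (f := fun _ => δ') (g := P[f | ℱ (n + m)]) (s := B n m) (μ := P)
        (integrableOn_const (measure_ne_top _ _))
        integrable_condExp.integrableOn hc
      simpa [mul_comm, measureReal_def] using this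
    -- splitting B n m
    have hsplit : B n (m + 1) = B n m \ D (n + m) := by
      ext ω
      constructor
      · intro hω
        refine ⟨⟨hω.1, fun k hk => hω.2 k (by omega)⟩, ?_⟩
        intro hD
        exact hD (hω.2 m (by omega))
      · rintro ⟨hω, hD⟩
        refine ⟨hω.1, fun k hk => ?_⟩
        rcases Nat.lt_succ_iff_lt_or_eq.mp hk with h | h
        · exact hω.2 k h
        · subst h
          exact not_not.mp hD
    have hadd := measure_inter_add_diff (μ := P) (B n m) (hDmeas (n + m))
    have hfin1 : P (B n m ∩ D (n + m)) ≠ ⊤ := measure_ne_top _ _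
    have hfin2 : P (B n m \ D (n + m)) ≠ ⊤ := measure_ne_top _ _
    have haddR : (P (B n m ∩ D (n + m))).toReal + (P (B n m \ D (n + m))).toReal
        = (P (B n m)).toReal := by
      rw [← ENNReal.toReal_add hfin1 hfin2, hadd]
    rw [hsplit]
    have hlow : δ' * (P (B n m)).toReal ≤ (P (B n m ∩ D (n + m))).toReal := h2.trans_eq h1
    nlinarith [ENNReal.toReal_nonneg (a := P (B n m \ D (n + m)))]
  -- geometric decay
  have hpow : ∀ n m, (P (B n m)).toReal ≤ (1 - δ') ^ m := by
    intro n m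
    induction m with
    | zero =>
      simpa using ENNReal.toReal_mono (by simp) (prob_le_one (μ := P) (s := B n 0))
    | succ m ih =>
      calc (P (B n (m + 1))).toReal ≤ (1 - δ') * (P (B n m)).toReal := key n m
        _ ≤ (1 - δ') * (1 - δ') ^ m := by
            apply mul_le_mul_of_nonneg_left ih (by linarith)
        _ = (1 - δ') ^ (m + 1) := by ring
  -- the "constant ≥ 1 forever" sets are null
  set C : ℕ → Set Ω :=
    fun n => {ω | 1 ≤ Z n ω ∧ ∀ k, Z (n + k + 1) ω = Z (n + k) ω} with hCdef
  have hC0 : ∀ n, P (C n) = 0 := by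
    intro n
    have hsub : ∀ m, C n ⊆ B n m := fun m ω hω => ⟨hω.1, fun k _ => hω.2 k⟩
    have hle : ∀ m, (P (C n)).toReal ≤ (1 - δ') ^ m := fun m =>
      le_trans (ENNReal.toReal_mono (measure_ne_top _ _)
        (measure_mono (hsub m))) (hpow n m)
    have htend : Tendsto (fun m : ℕ => (1 - δ') ^ m) atTop (nhds 0) :=
      tendsto_pow_atTop_nhds_zero_of_lt_one (by linarith) (by linarith)
    have h0 : (P (C n)).toReal ≤ 0 := ge_of_tendsto htend (Eventually.of_forall hle)
    have : (P (C n)).toReal = 0 := le_antisymm h0 ENNReal.toReal_nonneg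
    exact (ENNReal.toReal_eq_zero_iff _).mp this |>.resolve_right (measure_ne_top _ _)
  have hCU : ∀ᵐ ω ∂P, ω ∉ ⋃ n, C n := by
    rw [ae_iff]
    have hset : {a : Ω | ¬ a ∉ ⋃ n, C n} = ⋃ n, C n := by ext a; simp
    rw [hset]; exact measure_iUnion_null hC0
  -- a.s. convergence of the supermartingale
  have hconv : ∀ᵐ ω ∂P, ∃ c : ℝ, Tendsto (fun n => Z n ω) atTop (nhds c) := by
    have hsub : Submartingale (-Z) ℱ P := hsuper.neg
    set R : NNReal := (∫ ω, Z 0 ω ∂P).toNNReal with hR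
    have hbdd : ∀ n, eLpNorm ((-Z) n) 1 P ≤ R := by
      intro n
      have h1 : eLpNorm ((-Z) n) 1 P = eLpNorm (Z n) 1 P := by
        simp only [Pi.neg_apply]
        exact eLpNorm_neg (f := Z n) (p := 1) (μ := P)
      have h2 : eLpNorm (Z n) 1 P = ENNReal.ofReal (∫ ω, Z n ω ∂P) := by
        rw [eLpNorm_one_eq_lintegral_enorm,
          ofReal_integral_eq_lintegral_ofReal (hsuper.integrable n)
            (Eventually.of_forall (hZnn n))]
        congr 1
        ext ω
        rw [← ofReal_norm, Real.norm_of_nonneg (hZnn n ω)]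
      have h3 : ∫ ω, Z n ω ∂P ≤ ∫ ω, Z 0 ω ∂P := by
        have := hsuper.setIntegral_le (Nat.zero_le n) (MeasurableSet.univ (α := Ω))
        simpa [setIntegral_univ] using this
      rw [h1, h2]
      calc ENNReal.ofReal (∫ ω, Z n ω ∂P) ≤ ENNReal.ofReal (∫ ω, Z 0 ω ∂P) :=
            ENNReal.ofReal_le_ofReal h3
        _ = (R : ENNReal) := rfl
    filter_upwards [hsub.ae_tendsto_limitProcess hbdd] with ω hω
    refine ⟨-(ℱ.limitProcess (-Z) P ω), ?_⟩
    have := hω.neg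
    simpa using this
  -- integer values: |a - b| < 1 implies equality
  have hint_eq : ∀ (a b : ℕ), |(a : ℝ) - b| < 1 → (a : ℝ) = b := by
    intro a b hab
    have h1 : |(a : ℤ) - b| < 1 := by
      have : ((|(a : ℤ) - b| : ℤ) : ℝ) < 1 := by push_cast; exact_mod_cast hab
      exact_mod_cast this
    have h2 := abs_lt.mp h1
    have : a = b := by omega
    exact_mod_cast congrArg (Nat.cast : ℕ → ℝ) this
  -- main a.e. statement
  have hmain : ∀ᵐ ω ∂P, Tendsto (fun n => Z n ω) atTop (nhds 0) := by
    filter_upwards [hconv, hCU] with ω hc hU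
    obtain ⟨c, hc⟩ := hc
    -- eventual constancy
    have hcauchy : ∃ N, ∀ k, N ≤ k → Z k ω = Z N ω := by
      have := (Metric.tendsto_atTop.mp hc) (1 / 2) (by norm_num)
      obtain ⟨N, hN⟩ := this
      refine ⟨N, fun k hk => ?_⟩
      have h1 := hN k hk
      have h2 := hN N le_rfl
      obtain ⟨a, ha⟩ := hint k ω
      obtain ⟨b, hb⟩ := hint N ω
      rw [ha, hb]
      apply hint_eq
      rw [← ha, ← hb]
      have : |Z k ω - Z N ω| ≤ |Z k ω - c| + |Z N ω - c| := by
        rw [abs_sub_comm (Z N ω) c] at *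
        calc |Z k ω - Z N ω| = |(Z k ω - c) + (c - Z N ω)| := by ring_nf
          _ ≤ |Z k ω - c| + |c - Z N ω| := abs_add_le _ _
      rw [Real.dist_eq] at h1 h2
      linarith
    obtain ⟨N, hN⟩ := hcauchy
    -- Z N ω must be 0
    have hZN0 : Z N ω = 0 := by
      by_contra h
      obtain ⟨m, hm⟩ := hint N ω
      have hm1 : 1 ≤ Z N ω := by
        rw [hm] at h ⊢
        have : m ≠ 0 := by
          intro h0; apply h; rw [h0]; simp
        exact_mod_cast Nat.one_le_iff_ne_zero.mpr this
      apply hU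
      refine Set.mem_iUnion.mpr ⟨N, hm1, fun k => ?_⟩
      rw [hN (N + k + 1) (by omega), hN (N + k) (by omega)]
    have hev : ∀ᶠ n in atTop, Z n ω = 0 := by
      filter_upwards [eventually_ge_atTop N] with n hn
      rw [hN n hn, hZN0]
    exact Tendsto.congr' (by filter_upwards [hev] with n hn; exact hn.symm)
      tendsto_const_nhds
  refine ⟨hmain, ?_⟩
  -- second conclusion
  have hsub : {ω | ∀ n, 1 ≤ Z n ω} ⊆ {ω | ¬ Tendsto (fun n => Z n ω) atTop (nhds 0)} := by
    intro ω hω ht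
    have := (Metric.tendsto_atTop.mp ht) (1 / 2) (by norm_num)
    obtain ⟨N, hN⟩ := this
    have h1 := hN N le_rfl
    rw [Real.dist_eq, sub_zero, abs_of_nonneg (hZnn N ω)] at h1
    have := hω N
    linarith
  exact measure_mono_null hsub (ae_iff.mp hmain)
end

section
/- (Extinction criterion.) Let (p_k)_{k≥0} be a probability distribution on the nonnegative integers with mean Σ_{k≥0} k·p_k ≤ 1 and with p_1 < 1, and let φ(z) = Σ_{k≥0} p_k z^k be its probability generating function. Then lim_{n→∞} φ^{[n]}(0) = 1; i.e., the critical or subcritical (non-degenerate) Galton–Watson process started from one particle dies out almost surely. -/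
open Filter

/-- Extinction criterion: a critical or subcritical (non-degenerate) Galton–Watson process
dies out almost surely, i.e. the iterates of its generating function at `0` tend to `1`. -/
theorem galton_watson_extinction (p : ℕ → ℝ)
    (hp_nonneg : ∀ k, 0 ≤ p k) (hp_summable : Summable p) (hp_total : ∑' k : ℕ, p k = 1)
    (hmean_summable : Summable (fun k : ℕ => (k : ℝ) * p k))
    (hmean : ∑' k : ℕ, (k : ℝ) * p k ≤ 1)
    (hp1 : p 1 < 1)
    (φ : ℝ → ℝ) (hφ : ∀ z, φ z = ∑' k : ℕ, p k * z ^ k) :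
    Tendsto (fun n : ℕ => φ^[n] 0) atTop (nhds 1) := by
  -- summability of the series defining φ on [0,1]
  have hsum : ∀ z ∈ Set.Icc (0:ℝ) 1, Summable (fun k => p k * z ^ k) := by
    intro z hz
    refine hp_summable.of_nonneg_of_le
      (fun k => mul_nonneg (hp_nonneg k) (pow_nonneg hz.1 k)) (fun k => ?_)
    calc p k * z ^ k ≤ p k * 1 :=
          mul_le_mul_of_nonneg_left (pow_le_one₀ hz.1 hz.2) (hp_nonneg k)
      _ = p k := mul_one _
  -- φ maps [0,1] to [0,1]
  have hmaps : ∀ z ∈ Set.Icc (0:ℝ) 1, φ z ∈ Set.Icc (0:ℝ) 1 := by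
    intro z hz
    rw [hφ]
    refine ⟨tsum_nonneg fun k => mul_nonneg (hp_nonneg k) (pow_nonneg hz.1 k), ?_⟩
    calc (∑' k, p k * z ^ k) ≤ ∑' k, p k := by
          refine Summable.tsum_le_tsum (fun k => ?_) (hsum z hz) hp_summable
          calc p k * z ^ k ≤ p k * 1 :=
                mul_le_mul_of_nonneg_left (pow_le_one₀ hz.1 hz.2) (hp_nonneg k)
            _ = p k := mul_one _
      _ = 1 := hp_total
  -- φ is monotone on [0,1]
  have hmono : ∀ z ∈ Set.Icc (0:ℝ) 1, ∀ w ∈ Set.Icc (0:ℝ) 1, z ≤ w → φ z ≤ φ w := by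
    intro z hz w hw hzw
    rw [hφ, hφ]
    exact Summable.tsum_le_tsum
      (fun k => mul_le_mul_of_nonneg_left (pow_le_pow_left₀ hz.1 hzw k) (hp_nonneg k))
      (hsum z hz) (hsum w hw)
  -- the iterates stay in [0,1]
  have hmem : ∀ n, φ^[n] 0 ∈ Set.Icc (0:ℝ) 1 := by
    intro n
    induction n with
    | zero => exact ⟨le_rfl, zero_le_one⟩
    | succ n ih =>
        rw [Function.iterate_succ_apply']
        exact hmaps _ ih
  -- the sequence of iterates is monotone
  have hstep : ∀ n, φ^[n] 0 ≤ φ^[n+1] 0 := by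
    intro n
    induction n with
    | zero => simpa using (hmaps 0 ⟨le_rfl, zero_le_one⟩).1
    | succ n ih =>
        have hm1 : φ (φ^[n] 0) ∈ Set.Icc (0:ℝ) 1 := hmaps _ (hmem n)
        rw [Function.iterate_succ_apply'] at ih
        rw [Function.iterate_succ_apply' φ (n+1), Function.iterate_succ_apply' φ n]
        exact hmono _ (hmem n) _ hm1 ih
  have hmonoSeq : Monotone (fun n => φ^[n] 0) := monotone_nat_of_le_succ hstep
  have hbdd : BddAbove (Set.range fun n => φ^[n] 0) := by
    refine ⟨1, ?_⟩
    rintro x ⟨n, rfl⟩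
    exact (hmem n).2
  set L : ℝ := ⨆ n, φ^[n] 0 with hLdef
  have hL : Tendsto (fun n => φ^[n] 0) atTop (nhds L) := tendsto_atTop_ciSup hmonoSeq hbdd
  have hL1 : L ≤ 1 := ciSup_le fun n => (hmem n).2
  have hL0 : 0 ≤ L := by
    have := le_ciSup hbdd 0
    simpa using this
  have hLmem : L ∈ Set.Icc (0:ℝ) 1 := ⟨hL0, hL1⟩
  -- continuity of φ on [0,1]
  have hcont : ContinuousOn φ (Set.Icc (0:ℝ) 1) := by
    have heq : φ = fun z => ∑' k, p k * z ^ k := funext hφ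
    rw [heq]
    refine (tendstoUniformlyOn_tsum hp_summable ?_).continuousOn
      (Filter.Eventually.of_forall fun t => ?_).frequently
    · intro k z hz
      rw [Real.norm_eq_abs, abs_of_nonneg (mul_nonneg (hp_nonneg k) (pow_nonneg hz.1 k))]
      calc p k * z ^ k ≤ p k * 1 :=
            mul_le_mul_of_nonneg_left (pow_le_one₀ hz.1 hz.2) (hp_nonneg k)
        _ = p k := mul_one _
    · exact (continuous_finset_sum _ fun k _ =>
        (continuous_const.mul (continuous_pow k))).continuousOn
  -- L is a fixed point of φ
  have hfix : φ L = L := by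
    have h1 : Tendsto (fun n => φ^[n+1] 0) atTop (nhds L) :=
      hL.comp (tendsto_add_atTop_nat 1)
    have h2 : Tendsto (fun n => φ (φ^[n] 0)) atTop (nhds (φ L)) := by
      have hc : ContinuousWithinAt φ (Set.Icc 0 1) L := hcont L hLmem
      exact hc.tendsto.comp
        (tendsto_nhdsWithin_of_tendsto_nhds_of_eventually_within _ hL
          (Filter.Eventually.of_forall hmem))
    have heq2 : (fun n => φ (φ^[n] 0)) = fun n => φ^[n+1] 0 :=
      funext fun n => (Function.iterate_succ_apply' φ n 0).symm
    rw [heq2] at h2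
    exact tendsto_nhds_unique h2 h1
  -- key: z < φ z for z ∈ [0,1)
  have hgt : ∀ z, 0 ≤ z → z < 1 → z < φ z := by
    intro z hz0 hz1
    have hz' : z ∈ Set.Icc (0:ℝ) 1 := ⟨hz0, hz1.le⟩
    have key : (1:ℝ) - φ z < 1 - z → z < φ z := fun h => by linarith
    apply key
    rw [hφ]
    have h1 : (1:ℝ) - ∑' k, p k * z ^ k = ∑' k, (p k - p k * z ^ k) := by
      rw [Summable.tsum_sub hp_summable (hsum z hz'), hp_total]
    rw [h1]
    by_cases hcase : ∃ m, 2 ≤ m ∧ 0 < p m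
    · obtain ⟨m, hm2, hpm⟩ := hcase
      have hle : ∀ k : ℕ, p k - p k * z ^ k ≤ (k : ℝ) * p k * (1 - z) := by
        intro k
        have hb : 1 + (k : ℝ) * (z - 1) ≤ z ^ k :=
          one_add_mul_sub_le_pow (by linarith) k
        nlinarith [mul_le_mul_of_nonneg_left hb (hp_nonneg k)]
      have hlt : p m - p m * z ^ m < (m : ℝ) * p m * (1 - z) := by
        have hb : 1 - z ^ m < (m : ℝ) * (1 - z) := by
          have hS : (∑ i ∈ Finset.range m, z ^ i) < (m : ℝ) := by
            calc (∑ i ∈ Finset.range m, z ^ i) < ∑ _i ∈ Finset.range m, (1:ℝ) := by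
                  refine Finset.sum_lt_sum (fun i _ => pow_le_one₀ hz0 hz1.le)
                    ⟨1, Finset.mem_range.2 (by omega), by simpa using hz1⟩
              _ = (m : ℝ) := by simp
          have hg := geom_sum_mul z m
          nlinarith [mul_lt_mul_of_pos_right hS (sub_pos.2 hz1)]
        nlinarith
      have hsg : Summable (fun k : ℕ => (k : ℝ) * p k * (1 - z)) :=
        hmean_summable.mul_right _
      have hlt2 : (∑' k, (p k - p k * z ^ k)) < ∑' k : ℕ, (k : ℝ) * p k * (1 - z) :=
        Summable.tsum_lt_tsum hle hlt (hp_summable.sub (hsum z hz')) hsg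
      have heq3 : (∑' k : ℕ, (k : ℝ) * p k * (1 - z)) = (∑' k : ℕ, (k : ℝ) * p k) * (1 - z) :=
        tsum_mul_right
      have hle3 : (∑' k : ℕ, (k : ℝ) * p k) * (1 - z) ≤ 1 - z := by
        nlinarith
      linarith [hlt2, heq3 ▸ hlt2]
    · push_neg at hcase
      have hp0 : ∀ m, 2 ≤ m → p m = 0 := fun m hm =>
        le_antisymm (hcase m hm) (hp_nonneg m)
      have heq4 : (∑' k, (p k - p k * z ^ k)) =
          ∑ k ∈ Finset.range 2, (p k - p k * z ^ k) := by
        refine tsum_eq_sum fun k hk => ?_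
        have h2k : 2 ≤ k := by simp [Finset.mem_range, not_lt] at hk; omega
        simp [hp0 k h2k]
      rw [heq4]
      have : ∑ k ∈ Finset.range 2, (p k - p k * z ^ k) = p 1 * (1 - z) := by
        simp [Finset.sum_range_succ]
        ring
      rw [this]
      nlinarith
  -- conclude L = 1
  have hL_eq : L = 1 := by
    by_contra hne
    have hlt : L < 1 := lt_of_le_of_ne hL1 hne
    have := hgt L hL0 hlt
    rw [hfix] at this
    exact lt_irrefl _ this
  rw [hL_eq] at hL
  exact hL
end
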